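/- Let 𝔟 be a 6-dimensional 2-step nilpotent real Lie algebra with an invariant nondegenerate symmetric bilinear form such that there exist X, Y with Z := [X,Y] ≠ 0 and (Z, ·) not identically zero on 𝔟. Then with Z* satisfying (Z,Z*)=1, X* := [Z*,Y], Y* := [Z*,X], the six vectors X, Y, Z*, X*, Y*, Z form a basis of 𝔟, and the span of {X*, Y*, Z} equals [𝔟,𝔟] and equals the center 𝔷(𝔟). -/
import Mathlib


/-- In a 6-dimensional 2-step nilpotent real Lie algebra with a nondegenerate
invariant symmetric bilinear form, if `Z = [X,Y] ≠ 0`, `(Z,·) ≢ 0` and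
`(Z,Z*) = 1`, then with `X* = [Z*,Y]`, `Y* = [Z*,X]` the six vectors
`X, Y, Z*, X*, Y*, Z` form a basis, and `span{X*,Y*,Z} = [𝔟,𝔟] = 𝔷(𝔟)`. -/
theorem stmt_12 {L : Type*} [LieRing L] [LieAlgebra ℝ L] [FiniteDimensional ℝ L]
    (hdim : Module.finrank ℝ L = 6)
    (B : LinearMap.BilinForm ℝ L)
    (hsymm : ∀ X Y : L, B X Y = B Y X)
    (h2 : ∀ X Y Z : L, ⁅X, ⁅Y, Z⁆⁆ = 0)
    (hinv : ∀ X Y Z : L, B ⁅X, Y⁆ Z = - B Y ⁅X, Z⁆)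
    (hnd : ∀ V : L, (∀ W : L, B V W = 0) → V = 0)
    (X Y Zstar : L) (hZ : ⁅X, Y⁆ ≠ 0)
    (hBZ : ∃ W : L, B ⁅X, Y⁆ W ≠ 0)
    (hpair : B ⁅X, Y⁆ Zstar = 1) :
    LinearIndependent ℝ ![X, Y, Zstar, ⁅Zstar, Y⁆, ⁅Zstar, X⁆, ⁅X, Y⁆] ∧
    Submodule.span ℝ (Set.range ![X, Y, Zstar, ⁅Zstar, Y⁆, ⁅Zstar, X⁆, ⁅X, Y⁆]) = ⊤ ∧
    Submodule.span ℝ ({⁅Zstar, Y⁆, ⁅Zstar, X⁆, ⁅X, Y⁆} : Set L)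
      = Submodule.span ℝ {W : L | ∃ U V : L, W = ⁅U, V⁆} ∧
    (∀ W : L, W ∈ Submodule.span ℝ ({⁅Zstar, Y⁆, ⁅Zstar, X⁆, ⁅X, Y⁆} : Set L)
      ↔ ∀ U : L, ⁅W, U⁆ = 0) := by
  -- brackets are central
  have hc : ∀ U V W : L, ⁅⁅U, V⁆, W⁆ = 0 := by
    intro U V W
    rw [← lie_skew, h2, neg_zero]
  -- B between two brackets vanishes
  have hBrBr : ∀ U V W T : L, B ⁅U, V⁆ ⁅W, T⁆ = 0 := by
    intro U V W T
    rw [hinv, h2, map_zero, neg_zero]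
  -- key pairings
  have hXsX : B ⁅Zstar, Y⁆ X = -1 := by
    have h1 := hinv Y Zstar X
    have h3 : (⁅Y, X⁆ : L) = -⁅X, Y⁆ := (lie_skew Y X).symm
    rw [h3, map_neg] at h1
    rw [hsymm Zstar ⁅X, Y⁆, hpair] at h1
    have h2' : (⁅Zstar, Y⁆ : L) = -⁅Y, Zstar⁆ := (lie_skew Zstar Y).symm
    rw [h2', map_neg, LinearMap.neg_apply, h1]
    norm_num
  have hYsY : B ⁅Zstar, X⁆ Y = 1 := by
    rw [hinv, hsymm X ⁅Zstar, Y⁆, hXsX]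
    norm_num
  have hXsY : B ⁅Zstar, Y⁆ Y = 0 := by
    have h := hinv Zstar Y Y
    rw [hsymm Y ⁅Zstar, Y⁆] at h
    linarith
  have hYsX : B ⁅Zstar, X⁆ X = 0 := by
    have h := hinv Zstar X X
    rw [hsymm X ⁅Zstar, X⁆] at h
    linarith
  have hXsZs : B ⁅Zstar, Y⁆ Zstar = 0 := by
    rw [hinv, lie_self, map_zero, neg_zero]
  have hYsZs : B ⁅Zstar, X⁆ Zstar = 0 := by
    rw [hinv, lie_self, map_zero, neg_zero]
  have hZX : B ⁅X, Y⁆ X = 0 := by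
    rw [hinv, lie_self, map_zero, neg_zero]
  have hZY : B ⁅X, Y⁆ Y = 0 := by
    have h := hinv X Y Y
    rw [hsymm Y ⁅X, Y⁆] at h
    linarith
  set b : Fin 6 → L := ![X, Y, Zstar, ⁅Zstar, Y⁆, ⁅Zstar, X⁆, ⁅X, Y⁆] with hb
  have b0 : b 0 = X := rfl
  have b1 : b 1 = Y := rfl
  have b2 : b 2 = Zstar := rfl
  have b3 : b 3 = ⁅Zstar, Y⁆ := rfl
  have b4 : b 4 = ⁅Zstar, X⁆ := rfl
  have b5 : b 5 = ⁅X, Y⁆ := rfl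
  -- linear independence
  have hli : LinearIndependent ℝ b := by
    rw [Fintype.linearIndependent_iff]
    intro g hg
    rw [Fin.sum_univ_six, b0, b1, b2, b3, b4, b5] at hg
    have key : ∀ T : L, g 0 * B X T + g 1 * B Y T + g 2 * B Zstar T
        + g 3 * B ⁅Zstar, Y⁆ T + g 4 * B ⁅Zstar, X⁆ T + g 5 * B ⁅X, Y⁆ T = 0 := by
      intro T
      have := congrArg (fun v => B v T) hg
      simpa [map_add, map_smul, LinearMap.add_apply, LinearMap.smul_apply,
        smul_eq_mul] using this
    have e0 : g 0 = 0 := by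
      have := key ⁅Zstar, Y⁆
      rw [hsymm X ⁅Zstar, Y⁆, hsymm Y ⁅Zstar, Y⁆, hsymm Zstar ⁅Zstar, Y⁆,
        hXsX, hXsY, hXsZs, hBrBr, hBrBr, hBrBr] at this
      linarith
    have e1 : g 1 = 0 := by
      have := key ⁅Zstar, X⁆
      rw [hsymm X ⁅Zstar, X⁆, hsymm Y ⁅Zstar, X⁆, hsymm Zstar ⁅Zstar, X⁆,
        hYsX, hYsY, hYsZs, hBrBr, hBrBr, hBrBr] at this
      linarith
    have e2 : g 2 = 0 := by
      have := key ⁅X, Y⁆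
      rw [hsymm X ⁅X, Y⁆, hsymm Y ⁅X, Y⁆, hsymm Zstar ⁅X, Y⁆,
        hZX, hZY, hpair, hBrBr, hBrBr, hBrBr] at this
      linarith
    have e3 : g 3 = 0 := by
      have := key X
      rw [hXsX, hYsX, hZX, e0, e1, e2] at this
      linarith
    have e4 : g 4 = 0 := by
      have := key Y
      rw [hXsY, hYsY, hZY, e0, e1, e2] at this
      linarith
    have e5 : g 5 = 0 := by
      have := key Zstar
      rw [hXsZs, hYsZs, hpair, e0, e1, e2] at this
      linarith
    intro i
    fin_cases i <;> assumption
  -- span is everything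
  have hspan : Submodule.span ℝ (Set.range b) = ⊤ :=
    hli.span_eq_top_of_card_eq_finrank (by simpa using hdim.symm)
  have hmem : ∀ V : L, V ∈ Submodule.span ℝ (Set.range b) := by
    intro V; rw [hspan]; trivial
  set S : Submodule ℝ L := Submodule.span ℝ ({⁅Zstar, Y⁆, ⁅Zstar, X⁆, ⁅X, Y⁆} : Set L)
    with hS
  have hXsS : ⁅Zstar, Y⁆ ∈ S := Submodule.subset_span (by left; rfl)
  have hYsS : ⁅Zstar, X⁆ ∈ S := Submodule.subset_span (by right; left; rfl)
  have hZS : ⁅X, Y⁆ ∈ S := Submodule.subset_span (by right; right; rfl)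
  -- base cases for the inner induction
  have m0 : ⁅X, X⁆ ∈ S ∧ ⁅Y, X⁆ ∈ S ∧ ⁅Zstar, X⁆ ∈ S :=
    ⟨by rw [lie_self]; exact S.zero_mem,
     by rw [← lie_skew]; exact S.neg_mem hZS, hYsS⟩
  have m1 : ⁅X, Y⁆ ∈ S ∧ ⁅Y, Y⁆ ∈ S ∧ ⁅Zstar, Y⁆ ∈ S :=
    ⟨hZS, by rw [lie_self]; exact S.zero_mem, hXsS⟩
  have m2 : ⁅X, Zstar⁆ ∈ S ∧ ⁅Y, Zstar⁆ ∈ S ∧ ⁅Zstar, Zstar⁆ ∈ S :=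
    ⟨by rw [← lie_skew]; exact S.neg_mem hYsS,
     by rw [← lie_skew]; exact S.neg_mem hXsS,
     by rw [lie_self]; exact S.zero_mem⟩
  have mBr : ∀ U' V' : L, ⁅X, ⁅U', V'⁆⁆ ∈ S ∧ ⁅Y, ⁅U', V'⁆⁆ ∈ S ∧ ⁅Zstar, ⁅U', V'⁆⁆ ∈ S :=
    fun U' V' => ⟨by rw [h2]; exact S.zero_mem, by rw [h2]; exact S.zero_mem,
      by rw [h2]; exact S.zero_mem⟩
  -- every bracket with a generator on the left is in S
  have inner : ∀ U : L, ⁅X, U⁆ ∈ S ∧ ⁅Y, U⁆ ∈ S ∧ ⁅Zstar, U⁆ ∈ S := by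
    intro U
    refine Submodule.span_induction (p := fun u _ => ⁅X, u⁆ ∈ S ∧ ⁅Y, u⁆ ∈ S ∧ ⁅Zstar, u⁆ ∈ S)
      ?_ ?_ ?_ ?_ (hmem U)
    · rintro u ⟨i, rfl⟩
      fin_cases i
      exacts [m0, m1, m2, mBr Zstar Y, mBr Zstar X, mBr X Y]
    · simp only [lie_zero]
      exact ⟨S.zero_mem, S.zero_mem, S.zero_mem⟩
    · intro u v _ _ hu hv
      simp only [lie_add]
      exact ⟨S.add_mem hu.1 hv.1, S.add_mem hu.2.1 hv.2.1, S.add_mem hu.2.2 hv.2.2⟩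
    · intro a u _ hu
      simp only [lie_smul]
      exact ⟨S.smul_mem a hu.1, S.smul_mem a hu.2.1, S.smul_mem a hu.2.2⟩
  have n3 : ∀ V : L, ⁅⁅Zstar, Y⁆, V⁆ ∈ S := fun V => by rw [hc]; exact S.zero_mem
  have n4 : ∀ V : L, ⁅⁅Zstar, X⁆, V⁆ ∈ S := fun V => by rw [hc]; exact S.zero_mem
  have n5 : ∀ V : L, ⁅⁅X, Y⁆, V⁆ ∈ S := fun V => by rw [hc]; exact S.zero_mem
  have hbr : ∀ U V : L, ⁅U, V⁆ ∈ S := by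
    intro U V
    refine Submodule.span_induction (p := fun u _ => ⁅u, V⁆ ∈ S) ?_ ?_ ?_ ?_ (hmem U)
    · rintro u ⟨i, rfl⟩
      fin_cases i
      exacts [(inner V).1, (inner V).2.1, (inner V).2.2, n3 V, n4 V, n5 V]
    · show ⁅(0 : L), V⁆ ∈ S
      rw [zero_lie]; exact S.zero_mem
    · intro u v _ _ hu hv
      show ⁅u + v, V⁆ ∈ S
      rw [add_lie]; exact S.add_mem hu hv
    · intro a u _ hu
      show ⁅a • u, V⁆ ∈ S
      rw [smul_lie]; exact S.smul_mem a hu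
  refine ⟨hli, hspan, ?_, ?_⟩
  · -- S = span of all brackets
    apply le_antisymm
    · apply Submodule.span_mono
      rintro w (rfl | rfl | rfl)
      exacts [⟨Zstar, Y, rfl⟩, ⟨Zstar, X, rfl⟩, ⟨X, Y, rfl⟩]
    · rw [Submodule.span_le]
      rintro w ⟨U, V, rfl⟩
      exact hbr U V
  · -- S = center
    intro W
    constructor
    · intro hW U
      refine Submodule.span_induction (p := fun w _ => ⁅w, U⁆ = 0) ?_ ?_ ?_ ?_ hW
      · rintro w (rfl | rfl | rfl) <;> exact hc _ _ _
      · exact zero_lie U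
      · intro u v _ _ hu hv; rw [add_lie, hu, hv, add_zero]
      · intro a u _ hu; rw [smul_lie, hu, smul_zero]
    · intro hcen
      obtain ⟨c, hWc⟩ := (Submodule.mem_span_range_iff_exists_fun ℝ).1 (hmem W)
      rw [Fin.sum_univ_six, b0, b1, b2, b3, b4, b5] at hWc
      have hWY : c 0 • ⁅X, Y⁆ + c 2 • ⁅Zstar, Y⁆ = 0 := by
        have h := hcen Y
        rw [← hWc] at h
        simpa [add_lie, smul_lie, lie_self, hc] using h
      have hWX : c 1 • ⁅Y, X⁆ + c 2 • ⁅Zstar, X⁆ = 0 := by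
        have h := hcen X
        rw [← hWc] at h
        simpa [add_lie, smul_lie, lie_self, hc] using h
      have h02 : c 0 = 0 ∧ c 2 = 0 := by
        have hz := Fintype.linearIndependent_iff.1 hli ![0, 0, 0, c 2, 0, c 0] ?_
        · have z5 := hz 5
          have z3 := hz 3
          rw [show (![0, 0, 0, c 2, 0, c 0] : Fin 6 → ℝ) 5 = c 0 from rfl] at z5
          rw [show (![0, 0, 0, c 2, 0, c 0] : Fin 6 → ℝ) 3 = c 2 from rfl] at z3
          exact ⟨z5, z3⟩
        · rw [Fin.sum_univ_six, b0, b1, b2, b3, b4, b5,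
            show (![0, 0, 0, c 2, 0, c 0] : Fin 6 → ℝ) 0 = 0 from rfl,
            show (![0, 0, 0, c 2, 0, c 0] : Fin 6 → ℝ) 1 = 0 from rfl,
            show (![0, 0, 0, c 2, 0, c 0] : Fin 6 → ℝ) 2 = 0 from rfl,
            show (![0, 0, 0, c 2, 0, c 0] : Fin 6 → ℝ) 3 = c 2 from rfl,
            show (![0, 0, 0, c 2, 0, c 0] : Fin 6 → ℝ) 4 = 0 from rfl,
            show (![0, 0, 0, c 2, 0, c 0] : Fin 6 → ℝ) 5 = c 0 from rfl]
          simp only [zero_smul, zero_add, add_zero]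
          rw [add_comm]
          exact hWY
      have h1 : c 1 = 0 := by
        have hz := Fintype.linearIndependent_iff.1 hli ![0, 0, 0, 0, 0, c 1] ?_
        · have z5 := hz 5
          rw [show (![0, 0, 0, 0, 0, c 1] : Fin 6 → ℝ) 5 = c 1 from rfl] at z5
          exact z5
        · rw [Fin.sum_univ_six, b0, b1, b2, b3, b4, b5,
            show (![0, 0, 0, 0, 0, c 1] : Fin 6 → ℝ) 0 = 0 from rfl,
            show (![0, 0, 0, 0, 0, c 1] : Fin 6 → ℝ) 1 = 0 from rfl,
            show (![0, 0, 0, 0, 0, c 1] : Fin 6 → ℝ) 2 = 0 from rfl,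
            show (![0, 0, 0, 0, 0, c 1] : Fin 6 → ℝ) 3 = 0 from rfl,
            show (![0, 0, 0, 0, 0, c 1] : Fin 6 → ℝ) 4 = 0 from rfl,
            show (![0, 0, 0, 0, 0, c 1] : Fin 6 → ℝ) 5 = c 1 from rfl]
          simp only [zero_smul, zero_add, add_zero]
          have h' := hWX
          rw [h02.2, zero_smul, add_zero, ← lie_skew Y X, smul_neg, neg_eq_zero] at h'
          exact h'
      rw [← hWc, h02.1, h02.2, h1, zero_smul, zero_smul, zero_smul, zero_add, zero_add,
        zero_add]
      exact S.add_mem (S.add_mem (S.smul_mem _ hXsS) (S.smul_mem _ hYsS))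
        (S.smul_mem _ hZS)
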